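/- For each positive integer n, the function f_n(x) = ∑_{k=1}^n μ(k)·ν(x/k) is constant on every interval [m, m+1) for integers m ≥ 1. -/

import Mathlib

open ArithmeticFunction

noncomputable def nu (x : ℝ) : ℝ := 2 * Int.fract (x / 2) - Int.fract x

noncomputable def fn (n : ℕ) (x : ℝ) : ℝ :=
  ∑ k ∈ Finset.Icc 1 n, (moebius k : ℝ) * nu (x / k)

lemma nu_eq_floor (t : ℝ) : nu t = (⌊t⌋ : ℝ) - 2 * (⌊t / 2⌋ : ℝ) := by
  unfold nu
  rw [Int.fract, Int.fract]
  ring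

lemma nu_div_eq (m k : ℕ) (x : ℝ) (hx : x ∈ Set.Ico (m : ℝ) (m + 1)) :
    nu (x / k) = ((m / k : ℕ) : ℝ) - 2 * ((m / k / 2 : ℕ) : ℝ) := by
  obtain ⟨h1, h2⟩ := hx
  have hx0 : (0 : ℝ) ≤ x := le_trans (by positivity) h1
  have hfm : ⌊x⌋₊ = m := Nat.floor_eq_iff hx0 |>.mpr ⟨h1, h2⟩
  have hk : ⌊x / k⌋₊ = m / k := by rw [Nat.floor_div_natCast, hfm]
  have hk2 : ⌊x / k / 2⌋₊ = m / k / 2 := by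
    rw [show ((2:ℝ)) = ((2:ℕ):ℝ) by norm_num, Nat.floor_div_natCast, hk]
  have hxk : (0 : ℝ) ≤ x / k := by positivity
  rw [nu_eq_floor, ← Int.natCast_floor_eq_floor hxk,
    ← Int.natCast_floor_eq_floor (by positivity : (0:ℝ) ≤ x / k / 2), hk, hk2]
  norm_cast

theorem stmt_11 : ∀ n : ℕ, 0 < n → ∀ m : ℕ, 1 ≤ m → ∀ x y : ℝ,
    x ∈ Set.Ico (m : ℝ) (m + 1) → y ∈ Set.Ico (m : ℝ) (m + 1) → fn n x = fn n y := by
  intro n _ m _ x y hx hy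
  unfold fn
  refine Finset.sum_congr rfl fun k _ => ?_
  rw [nu_div_eq m k x hx, nu_div_eq m k y hy]
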